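/- Let a : ℕ × ℕ → ℚ(q) be any doubly indexed sequence satisfying the recurrence a_{n+1, m} = [m]_q · a_{n, m} − [m+1]_q · a_{n, m+1} for all n, m ≥ 0. Then for every n ≥ 0, a_{n, 0} = ∑_{m=0}^{n} (−1)^m · [m]!_q · {n brace m}_q · a_{0, m}. -/
import Mathlib


open Finset

/-- The q-integer `[n]_q = 1 + q + ⋯ + q^(n-1)`. -/
def qInt {R : Type*} [CommSemiring R] (q : R) (n : ℕ) : R :=
  ∑ i ∈ Finset.range n, q ^ i

/-- The q-factorial `[n]!_q = [1]_q [2]_q ⋯ [n]_q`. -/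
def qFact {R : Type*} [CommSemiring R] (q : R) (n : ℕ) : R :=
  ∏ i ∈ Finset.range n, qInt q (i + 1)

/-- The Carlitz q-Stirling numbers of the second kind. -/
def qStirling {R : Type*} [CommSemiring R] (q : R) : ℕ → ℕ → R
  | 0, 0 => 1
  | 0, _ + 1 => 0
  | _ + 1, 0 => 0
  | n + 1, m + 1 => qStirling q n m + qInt q (m + 1) * qStirling q n (m + 1)

lemma qStirling_eq_zero {R : Type*} [CommSemiring R] (q : R) :
    ∀ n m : ℕ, n < m → qStirling q n m = 0 := by
  intro n
  induction n with
  | zero => intro m hm; match m, hm with | m + 1, _ => rfl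
  | succ n ih =>
    intro m hm
    match m, hm with
    | m + 1, hm =>
      have h1 : n < m := Nat.lt_of_succ_lt_succ hm
      have h2 : n < m + 1 := Nat.lt_succ_of_lt h1
      simp [qStirling, ih m h1, ih (m + 1) h2]

lemma qInt_zero {R : Type*} [CommSemiring R] (q : R) : qInt q 0 = 0 := by
  simp [qInt]

lemma qFact_succ {R : Type*} [CommSemiring R] (q : R) (m : ℕ) :
    qFact q (m + 1) = qFact q m * qInt q (m + 1) :=
  Finset.prod_range_succ _ _

/-- Variant B of the q-Akiyama–Tanigawa algorithm (Zeng): if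
`a_{n+1,m} = [m]_q a_{n,m} - [m+1]_q a_{n,m+1}` for all `n, m ≥ 0`, then
`a_{n,0} = ∑_{m=0}^n (-1)^m [m]!_q {n brace m}_q a_{0,m}`. -/
theorem qAkiyamaTanigawa_B (a : ℕ → ℕ → RatFunc ℚ)
    (hrec : ∀ n m : ℕ,
      a (n + 1) m = qInt (RatFunc.X : RatFunc ℚ) m * a n m
        - qInt (RatFunc.X : RatFunc ℚ) (m + 1) * a n (m + 1)) :
    ∀ n : ℕ, a n 0
      = ∑ m ∈ Finset.range (n + 1),
          (-1 : RatFunc ℚ) ^ m * qFact (RatFunc.X : RatFunc ℚ) m *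
            qStirling (RatFunc.X : RatFunc ℚ) n m * a 0 m := by
  set X : RatFunc ℚ := RatFunc.X with hX
  have key : ∀ k n : ℕ, a (n + k) 0
      = ∑ m ∈ Finset.range (k + 1),
          (-1 : RatFunc ℚ) ^ m * qFact X m * qStirling X k m * a n m := by
    intro k
    induction k with
    | zero => intro n; simp [qStirling, qFact]
    | succ k ih =>
      intro n
      have h1 : n + (k + 1) = (n + 1) + k := by ring
      rw [h1, ih (n + 1)]
      have hrw : ∀ m ∈ Finset.range (k + 1),
          (-1 : RatFunc ℚ) ^ m * qFact X m * qStirling X k m * a (n + 1) m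
          = (-1 : RatFunc ℚ) ^ m * qFact X m * qStirling X k m * (qInt X m * a n m)
            - (-1 : RatFunc ℚ) ^ m * qFact X m * qStirling X k m
              * (qInt X (m + 1) * a n (m + 1)) := by
        intro m _
        rw [hrec n m]; ring
      rw [Finset.sum_congr rfl hrw, Finset.sum_sub_distrib]
      -- first sum: shift index
      rw [Finset.sum_range_succ'
        (fun m => (-1 : RatFunc ℚ) ^ m * qFact X m * qStirling X k m * (qInt X m * a n m)) k]
      simp only [qInt_zero, zero_mul, mul_zero, add_zero]
      -- extend first shifted sum to range (k+1)
      have hext : ∑ m ∈ Finset.range k,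
          (-1 : RatFunc ℚ) ^ (m + 1) * qFact X (m + 1) * qStirling X k (m + 1)
            * (qInt X (m + 1) * a n (m + 1))
          = ∑ m ∈ Finset.range (k + 1),
          (-1 : RatFunc ℚ) ^ (m + 1) * qFact X (m + 1) * qStirling X k (m + 1)
            * (qInt X (m + 1) * a n (m + 1)) := by
        rw [Finset.sum_range_succ, qStirling_eq_zero X k (k + 1) (Nat.lt_succ_self k)]
        ring
      rw [hext, ← Finset.sum_sub_distrib]
      -- rewrite RHS
      rw [Finset.sum_range_succ'
        (fun m => (-1 : RatFunc ℚ) ^ m * qFact X m * qStirling X (k + 1) m * a n m) (k + 1)]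
      have h0 : qStirling X (k + 1) 0 = 0 := rfl
      rw [h0]
      simp only [mul_zero, zero_mul, add_zero]
      apply Finset.sum_congr rfl
      intro m _
      show (-1 : RatFunc ℚ) ^ (m + 1) * qFact X (m + 1) * qStirling X k (m + 1)
            * (qInt X (m + 1) * a n (m + 1))
          - (-1 : RatFunc ℚ) ^ m * qFact X m * qStirling X k m
            * (qInt X (m + 1) * a n (m + 1))
        = (-1 : RatFunc ℚ) ^ (m + 1) * qFact X (m + 1) * qStirling X (k + 1) (m + 1)
            * a n (m + 1)
      rw [show qStirling X (k + 1) (m + 1)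
          = qStirling X k m + qInt X (m + 1) * qStirling X k (m + 1) from rfl,
        qFact_succ, pow_succ]
      ring
  intro n
  have := key n 0
  simpa using this
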